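/- Every additive category on which the class of all kernel-cokernel pairs forms an exact structure is quasi-abelian. Combined with the fact that AI-categories carry the exact structure of all kernel-cokernel pairs, every AI-category is quasi-abelian. -/

import Mathlib

open CategoryTheory CategoryTheory.Limits

universe v u

variable {C : Type u} [Category.{v} C] [Preadditive C]

/-- `(i, d)` is a kernel-cokernel pair. -/
structure IsKernelCokernelPair {A B X : C} (i : A ⟶ B) (d : B ⟶ X) : Prop where
  w : i ≫ d = 0
  isKernel : Nonempty (IsLimit (KernelFork.ofι i w))
  isCokernel : Nonempty (IsColimit (CokernelCofork.ofπ d w))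

/-- A Quillen exact structure on an additive category. -/
structure ExactStructure (C : Type u) [Category.{v} C] [Preadditive C] :
    Type (max u v) where
  E : ∀ ⦃A B X : C⦄, (A ⟶ B) → (B ⟶ X) → Prop
  pair : ∀ ⦃A B X : C⦄ {i : A ⟶ B} {d : B ⟶ X}, E i d → IsKernelCokernelPair i d
  iso_closed : ∀ ⦃A B X A' B' X' : C⦄ {i : A ⟶ B} {d : B ⟶ X} {i' : A' ⟶ B'} {d' : B' ⟶ X'}
      (eA : A ≅ A') (eB : B ≅ B') (eX : X ≅ X'),
      E i d → i ≫ eB.hom = eA.hom ≫ i' → d ≫ eX.hom = eB.hom ≫ d' → E i' d'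
  admMono_id : ∀ A : C, ∃ (X : C) (d : A ⟶ X), E (𝟙 A) d
  admEpi_id : ∀ A : C, ∃ (X : C) (i : X ⟶ A), E i (𝟙 A)
  admMono_comp : ∀ ⦃A B D : C⦄ (f : A ⟶ B) (g : B ⟶ D),
      (∃ (X : C) (d : B ⟶ X), E f d) → (∃ (X : C) (d : D ⟶ X), E g d) →
      ∃ (X : C) (d : D ⟶ X), E (f ≫ g) d
  admEpi_comp : ∀ ⦃A B D : C⦄ (f : A ⟶ B) (g : B ⟶ D),
      (∃ (X : C) (i : X ⟶ A), E i f) → (∃ (X : C) (i : X ⟶ B), E i g) →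
      ∃ (X : C) (i : X ⟶ A), E i (f ≫ g)
  pushout_admMono : ∀ ⦃A B Z : C⦄ (i : A ⟶ B) (f : A ⟶ Z),
      (∃ (X : C) (d : B ⟶ X), E i d) →
      ∃ (D : C) (g : B ⟶ D) (j : Z ⟶ D) (w : i ≫ g = f ≫ j),
        Nonempty (IsColimit (PushoutCocone.mk g j w)) ∧ ∃ (X : C) (d : D ⟶ X), E j d
  pullback_admEpi : ∀ ⦃B D Z : C⦄ (h : B ⟶ D) (g : Z ⟶ D),
      (∃ (X : C) (i : X ⟶ B), E i h) →
      ∃ (A : C) (f : A ⟶ B) (k : A ⟶ Z) (w : f ≫ h = k ≫ g),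
        Nonempty (IsLimit (PullbackCone.mk f k w)) ∧ ∃ (X : C) (i : X ⟶ A), E i k

namespace ExactStructure

variable (Ex : ExactStructure C)

/-- `i` is an admissible monic. -/
def AdmMono {A B : C} (i : A ⟶ B) : Prop := ∃ (X : C) (d : B ⟶ X), Ex.E i d

/-- `d` is an admissible epic. -/
def AdmEpi {B X : C} (d : B ⟶ X) : Prop := ∃ (A : C) (i : A ⟶ B), Ex.E i d

/-- `f` is admissible: it factors as an admissible epic followed by an admissible monic. -/
def Admissible {A B : C} (f : A ⟶ B) : Prop :=
  ∃ (Z : C) (e : A ⟶ Z) (m : Z ⟶ B), Ex.AdmEpi e ∧ Ex.AdmMono m ∧ e ≫ m = f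

/-- `E` consists of all kernel-cokernel pairs. -/
def IsMaximalAll : Prop :=
  ∀ ⦃A B X : C⦄ (i : A ⟶ B) (d : B ⟶ X), IsKernelCokernelPair i d → Ex.E i d

/-- `S` is `E`-simple. -/
def ESimple (S : C) : Prop :=
  ¬ IsZero S ∧ ∀ ⦃A : C⦄ (i : A ⟶ S), Ex.AdmMono i → IsZero A ∨ IsIso i

end ExactStructure

/-- `A` is abelian: it has finite products, kernels, cokernels, every mono is normal
and every epi is normal. -/
def IsAbelianCat (C : Type u) [Category.{v} C] [Preadditive C] : Prop :=
  HasFiniteProducts C ∧ HasKernels C ∧ HasCokernels C ∧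
  (∀ ⦃X Y : C⦄ (f : X ⟶ Y), Mono f → Nonempty (NormalMono f)) ∧
  (∀ ⦃X Y : C⦄ (f : X ⟶ Y), Epi f → Nonempty (NormalEpi f))

/-- An admissible (`E`-)subobject of `X`. -/
structure ESub (Ex : ExactStructure C) (X : C) where
  obj : C
  ι : obj ⟶ X
  adm : Ex.AdmMono ι

/-- The order on `E`-subobjects of `X`. -/
def ESubLe (Ex : ExactStructure C) {X : C} (s t : ESub Ex X) : Prop :=
  ∃ h : s.obj ⟶ t.obj, Ex.AdmMono h ∧ h ≫ t.ι = s.ι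

/-- Two `E`-subobjects are isomorphic as subobjects. -/
def ESubEquiv (Ex : ExactStructure C) {X : C} (s t : ESub Ex X) : Prop :=
  ESubLe Ex s t ∧ ESubLe Ex t s

/-- The admissible intersection axiom (AI). -/
def AIAxiom (Ex : ExactStructure C) : Prop :=
  ∀ ⦃B Z D : C⦄ (g : B ⟶ D) (j : Z ⟶ D), Ex.AdmMono g → Ex.AdmMono j →
    ∃ (A : C) (f : A ⟶ B) (f' : A ⟶ Z) (w : f ≫ g = f' ≫ j),
      Ex.AdmMono f ∧ Ex.AdmMono f' ∧ Nonempty (IsLimit (PullbackCone.mk f f' w))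

/-- The admissible sum axiom (AS): for every pullback square of admissible monics,
the induced map from the pushout to the common codomain is an admissible monic. -/
def ASAxiom (Ex : ExactStructure C) : Prop :=
  ∀ ⦃A B Z D : C⦄ (f : A ⟶ B) (f' : A ⟶ Z) (g : B ⟶ D) (j : Z ⟶ D) (w : f ≫ g = f' ≫ j),
    Ex.AdmMono f → Ex.AdmMono f' → Ex.AdmMono g → Ex.AdmMono j →
    IsLimit (PullbackCone.mk f f' w) →
    ∀ ⦃P : C⦄ (l : B ⟶ P) (k : Z ⟶ P) (w' : f ≫ l = f' ≫ k),
      IsColimit (PushoutCocone.mk l k w') →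
      ∀ u : P ⟶ D, l ≫ u = g → k ≫ u = j → Ex.AdmMono u

/-- An AIS-category: an AI-category satisfying the admissible sum axiom. -/
def AISCat (Ex : ExactStructure C) : Prop := AIAxiom Ex ∧ ASAxiom Ex

/-- `f` is a kernel of some morphism. -/
def IsKernelMor {A B : C} (f : A ⟶ B) : Prop :=
  ∃ (Z : C) (g : B ⟶ Z) (w : f ≫ g = 0), Nonempty (IsLimit (KernelFork.ofι f w))

/-- `f` is a cokernel of some morphism. -/
def IsCokernelMor {A B : C} (f : A ⟶ B) : Prop :=
  ∃ (Z : C) (g : Z ⟶ A) (w : g ≫ f = 0), Nonempty (IsColimit (CokernelCofork.ofπ f w))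

/-- A quasi-abelian category: pre-abelian, kernels are stable under pushout and
cokernels are stable under pullback. -/
def IsQuasiAbelian (C : Type u) [Category.{v} C] [Preadditive C] : Prop :=
  HasKernels C ∧ HasCokernels C ∧
  (∀ ⦃A B Z : C⦄ (f : A ⟶ B) (t : A ⟶ Z), IsKernelMor f →
    ∀ ⦃P : C⦄ (s : B ⟶ P) (s' : Z ⟶ P) (w : f ≫ s = t ≫ s'),
      IsColimit (PushoutCocone.mk s s' w) → IsKernelMor s') ∧
  (∀ ⦃A B Z : C⦄ (f : B ⟶ A) (t : Z ⟶ A), IsCokernelMor f →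
    ∀ ⦃P : C⦄ (s : P ⟶ B) (s' : P ⟶ Z) (w : s ≫ f = s' ≫ t),
      IsLimit (PullbackCone.mk s s' w) → IsCokernelMor s')

/-- An `E`-composition series of length `n` for `X`. -/
structure CompSeries (Ex : ExactStructure C) (X : C) (n : ℕ) where
  obj : Fin (n + 1) → C
  map : ∀ i : Fin n, obj i.castSucc ⟶ obj i.succ
  zero : IsZero (obj 0)
  top : obj (Fin.last n) ≅ X
  adm : ∀ i : Fin n, Ex.AdmMono (map i)
  simpleFactor : ∀ i : Fin n,
    ∃ (Q : C) (d : obj i.succ ⟶ Q), Ex.E (map i) d ∧ Ex.ESimple Q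

/-- Two composition series are equivalent: there is a bijection of indices matching
isomorphic composition factors. -/
def CompSeries.EquivSeries {Ex : ExactStructure C} {X : C} {n m : ℕ}
    (s : CompSeries Ex X n) (t : CompSeries Ex X m) : Prop :=
  ∃ σ : Fin n ≃ Fin m, ∀ (i : Fin n) ⦃Q Q' : C⦄
    (d : s.obj i.succ ⟶ Q) (d' : t.obj (σ i).succ ⟶ Q'),
    Ex.E (s.map i) d → Ex.E (t.map (σ i)) d' → Nonempty (Q ≅ Q')

/-- The Jordan-Hölder property for an exact structure. -/
def JordanHolder (Ex : ExactStructure C) : Prop :=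
  ∀ (X : C) (n m : ℕ) (s : CompSeries Ex X n) (t : CompSeries Ex X m),
    n = m ∧ s.EquivSeries t

/-- A maximal `E`-subobject: one with `E`-simple cokernel. -/
def ESub.IsMax {Ex : ExactStructure C} {X : C} (A : ESub Ex X) : Prop :=
  ∃ (Q : C) (d : X ⟶ Q), Ex.E A.ι d ∧ Ex.ESimple Q

/-- `Y` belongs to the generalized intersection `Int_X(A, B)`: it is a maximal common
`E`-subobject of `A` and `B`. -/
def InInt {Ex : ExactStructure C} {X : C} (A B Y : ESub Ex X) : Prop :=
  ESubLe Ex Y A ∧ ESubLe Ex Y B ∧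
  ∀ Z : ESub Ex X, ESubLe Ex Z A → ESubLe Ex Z B → ESubLe Ex Y Z → ESubLe Ex Z Y

/-- A diamond exact category. -/
def DiamondCat (Ex : ExactStructure C) : Prop :=
  ∀ (X : C) (A B : ESub Ex X), A.IsMax → B.IsMax → ¬ ESubEquiv Ex A B →
    ∀ Y : ESub Ex X, InInt A B Y →
      (∀ (h : Y.obj ⟶ A.obj), Ex.AdmMono h → h ≫ A.ι = Y.ι →
        ∀ ⦃Q : C⦄ (d : A.obj ⟶ Q), Ex.E h d → Ex.ESimple Q) ∧
      (∀ (h : Y.obj ⟶ B.obj), Ex.AdmMono h → h ≫ B.ι = Y.ι →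
        ∀ ⦃Q : C⦄ (d : B.obj ⟶ Q), Ex.E h d → Ex.ESimple Q) ∧
      (∀ (hA : Y.obj ⟶ A.obj) (hB : Y.obj ⟶ B.obj), Ex.AdmMono hA → Ex.AdmMono hB →
        hA ≫ A.ι = Y.ι → hB ≫ B.ι = Y.ι →
        ∀ ⦃QXA QAY QXB QBY : C⦄
          (dXA : X ⟶ QXA) (dAY : A.obj ⟶ QAY) (dXB : X ⟶ QXB) (dBY : B.obj ⟶ QBY),
          Ex.E A.ι dXA → Ex.E hA dAY → Ex.E B.ι dXB → Ex.E hB dBY →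
          (Nonempty (QXA ≅ QXB) ∧ Nonempty (QAY ≅ QBY)) ∨
          (Nonempty (QXA ≅ QBY) ∧ Nonempty (QAY ≅ QXB)))


section AuxProofs
open Preadditive

lemma ExactStructure.admMono_comp_iso (Ex : ExactStructure C) {A B B' : C} {f : A ⟶ B}
    (e : B ≅ B') (h : Ex.AdmMono f) : Ex.AdmMono (f ≫ e.hom) := by
  obtain ⟨X, d, hE⟩ := h
  exact ⟨X, e.inv ≫ d, Ex.iso_closed (Iso.refl A) e (Iso.refl X) hE (by simp) (by simp)⟩

lemma ExactStructure.admMono_iso_comp (Ex : ExactStructure C) {A' A B : C} {f : A ⟶ B}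
    (e : A' ≅ A) (h : Ex.AdmMono f) : Ex.AdmMono (e.hom ≫ f) := by
  obtain ⟨X, d, hE⟩ := h
  exact ⟨X, d, Ex.iso_closed e.symm (Iso.refl B) (Iso.refl X) hE (by simp) (by simp)⟩

lemma isZero_of_kernel_id {X B : C} (i : X ⟶ B) (w : i ≫ 𝟙 B = 0)
    (h : IsLimit (KernelFork.ofι i w)) : IsZero X := by
  have hi : i = 0 := by simpa using w
  rw [IsZero.iff_id_eq_zero]
  apply Fork.IsLimit.hom_ext h
  simp [hi]

lemma IsKernelMor.comp_iso {Z D P : C} {j : Z ⟶ D} (h : IsKernelMor j) (e : D ≅ P) :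
    IsKernelMor (j ≫ e.hom) := by
  obtain ⟨Z₀, g, w, ⟨hl⟩⟩ := h
  refine ⟨Z₀, e.inv ≫ g, by simp [reassoc_of% w, w], ⟨?_⟩⟩
  refine KernelFork.IsLimit.ofι _ _
    (fun {W'} g' hg' => (KernelFork.IsLimit.lift' hl (g' ≫ e.inv)
      (by simpa using hg')).1) ?_ ?_
  · intro W' g' eq'
    have := (KernelFork.IsLimit.lift' hl (g' ≫ e.inv) (by simpa using eq')).2
    simp only [Fork.ι_ofι] at this
    rw [← Category.assoc, this]
    simp
  · intro W' g' eq' m hm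
    apply Fork.IsLimit.hom_ext hl
    have := (KernelFork.IsLimit.lift' hl (g' ≫ e.inv) (by simpa using eq')).2
    simp only [Fork.ι_ofι] at this ⊢
    rw [this]
    rw [← Category.assoc] at hm
    rw [← hm]
    simp

lemma IsCokernelMor.iso_comp {A Z P : C} {k : A ⟶ Z} (h : IsCokernelMor k) (e : P ≅ A) :
    IsCokernelMor (e.hom ≫ k) := by
  obtain ⟨Z₀, g, w, ⟨hc⟩⟩ := h
  refine ⟨Z₀, g ≫ e.inv, by simp [w], ⟨?_⟩⟩
  refine CokernelCofork.IsColimit.ofπ _ _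
    (fun {W'} n hn => (CokernelCofork.IsColimit.desc' hc (e.inv ≫ n)
      (by simpa using hn)).1) ?_ ?_
  · intro W' n hn
    have := (CokernelCofork.IsColimit.desc' hc (e.inv ≫ n) (by simpa using hn)).2
    simp only [Cofork.π_ofπ] at this
    rw [Category.assoc, this]
    simp
  · intro W' n hn m hm
    apply Cofork.IsColimit.hom_ext hc
    have := (CokernelCofork.IsColimit.desc' hc (e.inv ≫ n) (by simpa using hn)).2
    simp only [Cofork.π_ofπ] at this ⊢
    rw [this]
    rw [Category.assoc] at hm
    rw [← hm]
    simp

/-- In any exact structure, binary coproducts of any two objects exist, with both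
coprojections admissible monics. -/
lemma coprod_exists (Ex : ExactStructure C) (B X : C) :
    ∃ (D : C) (l : B ⟶ D) (r : X ⟶ D), Ex.AdmMono l ∧ Ex.AdmMono r ∧
      Nonempty (IsColimit (BinaryCofan.mk l r)) := by
  -- a pushout of an admissible monic with zero source along `0` is a binary coproduct
  have key : ∀ B X : C, ∃ (D : C) (l : B ⟶ D) (r : X ⟶ D), Ex.AdmMono r ∧
      Nonempty (IsColimit (BinaryCofan.mk l r)) := by
    intro B X
    obtain ⟨ZB, zB, hzB⟩ := Ex.admEpi_id B
    have hZB : IsZero ZB :=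
      isZero_of_kernel_id zB (Ex.pair hzB).w (Ex.pair hzB).isKernel.some
    obtain ⟨D, g, j, w, ⟨hD⟩, hj⟩ := Ex.pushout_admMono zB (0 : ZB ⟶ X) ⟨B, 𝟙 B, hzB⟩
    refine ⟨D, g, j, hj, ⟨?_⟩⟩
    refine BinaryCofan.isColimitMk
      (fun s => PushoutCocone.IsColimit.desc hD s.inl s.inr
        (by apply hZB.eq_of_src)) ?_ ?_ ?_
    · intro s; exact PushoutCocone.IsColimit.inl_desc hD _ _ _
    · intro s; exact PushoutCocone.IsColimit.inr_desc hD _ _ _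
    · intro s m h1 h2
      apply PushoutCocone.IsColimit.hom_ext hD
      · exact (show g ≫ m = s.inl from h1).trans (PushoutCocone.IsColimit.inl_desc hD s.inl s.inr
          (by apply hZB.eq_of_src)).symm
      · exact (show j ≫ m = s.inr from h2).trans (PushoutCocone.IsColimit.inr_desc hD s.inl s.inr
          (by apply hZB.eq_of_src)).symm
  obtain ⟨D, l, r, hr, ⟨hD⟩⟩ := key B X
  obtain ⟨D', l', r', hr', ⟨hD'⟩⟩ := key X B
  -- `D'` is a coproduct of `X` and `B`; flip it to a cofan on `(B, X)`
  have hD'' : IsColimit (BinaryCofan.mk r' l') :=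
    (BinaryCofan.isColimitFlip hD')
  let e : D' ≅ D := hD''.coconePointUniqueUpToIso hD
  have he : r' ≫ e.hom = l := by
    exact hD''.comp_coconePointUniqueUpToIso_hom hD ⟨WalkingPair.left⟩
  have hl : Ex.AdmMono l := by
    rw [← he]; exact Ex.admMono_comp_iso e hr'
  exact ⟨D, l, r, hl, hr, ⟨hD⟩⟩

/-- Under the AI axiom, every kernel-cokernel pair belongs to `E`. -/
lemma pair_mem_of_AI (Ex : ExactStructure C) (hAI : AIAxiom Ex) {A B X : C}
    (i : A ⟶ B) (d : B ⟶ X) (hp : IsKernelCokernelPair i d) : Ex.E i d := by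
  obtain ⟨hw, ⟨hker⟩, ⟨hcoker⟩⟩ := hp
  obtain ⟨D, l, r, hl, hr, ⟨hD⟩⟩ := coprod_exists Ex B X
  -- projections of the biproduct
  let p : D ⟶ B := hD.desc (BinaryCofan.mk (𝟙 B) (0 : X ⟶ B))
  have hlp : l ≫ p = 𝟙 B := hD.fac _ ⟨WalkingPair.left⟩
  have hrp : r ≫ p = 0 := hD.fac _ ⟨WalkingPair.right⟩
  let q : D ⟶ X := hD.desc (BinaryCofan.mk (0 : B ⟶ X) (𝟙 X))
  have hrq : r ≫ q = 𝟙 X := hD.fac _ ⟨WalkingPair.right⟩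
  -- the twisted inclusion `m₁ = (1, d)`
  let m₁ : B ⟶ D := l + d ≫ r
  let φ : D ⟶ D := 𝟙 D + p ≫ d ≫ r
  have hsq : (p ≫ d ≫ r) ≫ (p ≫ d ≫ r) = 0 := by
    rw [Category.assoc, Category.assoc, reassoc_of% hrp]
    simp
  haveI : IsIso φ := by
    refine ⟨𝟙 D - p ≫ d ≫ r, ?_, ?_⟩ <;>
      simp [φ, add_comp, comp_add, comp_sub, sub_comp, hsq]
  have hm₁eq : l ≫ φ = m₁ := by
    simp [φ, m₁, comp_add, reassoc_of% hlp]
  have hm₁ : Ex.AdmMono m₁ := by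
    rw [← hm₁eq]; exact Ex.admMono_comp_iso (asIso φ) hl
  have w0 : i ≫ l = i ≫ m₁ := by
    simp [m₁, comp_add, reassoc_of% hw, hw]
  -- `(A, i, i)` is the pullback of `l` and `m₁`
  have hfst : ∀ s : PullbackCone l m₁, s.fst = s.snd := by
    intro s
    have := congrArg (· ≫ p) s.condition
    simpa [m₁, add_comp, Category.assoc, hlp, hrp] using this
  have hsnd : ∀ s : PullbackCone l m₁, s.snd ≫ d = 0 := by
    intro s
    have hc := s.condition
    rw [hfst s] at hc
    have h2 : s.snd ≫ l + (s.snd ≫ d) ≫ r = s.snd ≫ l := by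
      simpa [m₁, comp_add, Category.assoc] using hc.symm
    have h3 : (s.snd ≫ d) ≫ r = 0 := add_eq_left.mp h2
    have := congrArg (· ≫ q) h3
    simpa [Category.assoc, hrq] using this
  have myLim : IsLimit (PullbackCone.mk i i w0) := by
    have hmono : Mono i := by
      have := mono_of_isLimit_fork hker
      simpa using this
    refine PullbackCone.IsLimit.mk w0
      (fun s => (KernelFork.IsLimit.lift' hker s.snd (hsnd s)).1) ?_ ?_ ?_
    · intro s
      have := (KernelFork.IsLimit.lift' hker s.snd (hsnd s)).2
      simp only [Fork.ι_ofι] at this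
      rw [this, hfst s]
    · intro s
      have := (KernelFork.IsLimit.lift' hker s.snd (hsnd s)).2
      simpa using this
    · intro s m hm1 hm2
      rw [← cancel_mono i, hm2]
      have := (KernelFork.IsLimit.lift' hker s.snd (hsnd s)).2
      simp only [Fork.ι_ofι] at this
      rw [this]
  obtain ⟨A', f, f', w', hf, hf', ⟨hlim⟩⟩ := hAI l m₁ hl hm₁
  let e : A ≅ A' := myLim.conePointUniqueUpToIso hlim
  have he : e.hom ≫ f = i := by
    exact myLim.conePointUniqueUpToIso_hom_comp hlim WalkingCospan.left
  have hi : Ex.AdmMono i := by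
    rw [← he]; exact Ex.admMono_iso_comp e hf
  obtain ⟨X₀, d₀, hE⟩ := hi
  -- `d₀` and `d` are both cokernels of `i`, hence isomorphic
  obtain ⟨w₀, _, ⟨hcok₀⟩⟩ := Ex.pair hE
  let eX : X₀ ≅ X := hcok₀.coconePointUniqueUpToIso hcoker
  have heX : d₀ ≫ eX.hom = d := by
    simpa using hcok₀.comp_coconePointUniqueUpToIso_hom hcoker WalkingParallelPair.one
  exact Ex.iso_closed (Iso.refl A) (Iso.refl B) eX hE (by simp) (by simp [heX])

/-- If the exact structure contains all kernel-cokernel pairs, the category is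
quasi-abelian. -/
lemma quasi_of_max [HasKernels C] [HasCokernels C] (Ex : ExactStructure C)
    (hmax : ∀ ⦃A B X : C⦄ (i : A ⟶ B) (d : B ⟶ X), IsKernelCokernelPair i d → Ex.E i d) :
    IsQuasiAbelian C := by
  refine ⟨inferInstance, inferInstance, ?_, ?_⟩
  · -- pushouts of kernels are kernels
    intro A B Z f t hf P s s' w hP
    obtain ⟨Z₀, g, wg, ⟨hl⟩⟩ := hf
    have hmono : Mono f := by
      have := mono_of_isLimit_fork hl
      simpa using this
    -- `(f, cokernel.π f)` is a kernel-cokernel pair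
    have hpair : IsKernelCokernelPair f (cokernel.π f) := by
      refine ⟨cokernel.condition f, ⟨?_⟩, ⟨cokernelIsCokernel f⟩⟩
      refine KernelFork.IsLimit.ofι' f (cokernel.condition f) ?_
      intro W k hk
      have hkg : k ≫ g = 0 := by
        have : g = cokernel.π f ≫ cokernel.desc f g wg := by simp
        rw [this, ← Category.assoc, hk, zero_comp]
      obtain ⟨u, hu⟩ := KernelFork.IsLimit.lift' hl k hkg
      simp only [Fork.ι_ofι] at hu
      exact ⟨u, hu⟩
    have hAdm : Ex.AdmMono f := ⟨_, _, hmax f (cokernel.π f) hpair⟩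
    obtain ⟨D, g₂, j, w₂, ⟨hD⟩, X₂, d₂, hE₂⟩ := Ex.pushout_admMono f t hAdm
    have hjker : IsKernelMor j := ⟨X₂, d₂, (Ex.pair hE₂).w, (Ex.pair hE₂).isKernel⟩
    let e : D ≅ P := hD.coconePointUniqueUpToIso hP
    have he : j ≫ e.hom = s' := by
      exact hD.comp_coconePointUniqueUpToIso_hom hP WalkingSpan.right
    rw [← he]
    exact hjker.comp_iso e
  · -- pullbacks of cokernels are cokernels
    intro A B Z f t hf P s s' w hP
    obtain ⟨Z₀, g, wg, ⟨hc⟩⟩ := hf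
    -- `(kernel.ι f, f)` is a kernel-cokernel pair
    have hepi : Epi f := by
      have := epi_of_isColimit_cofork hc
      simpa using this
    have hpair : IsKernelCokernelPair (kernel.ι f) f := by
      refine ⟨kernel.condition f, ⟨kernelIsKernel f⟩, ⟨?_⟩⟩
      refine CokernelCofork.IsColimit.ofπ' f (kernel.condition f) ?_
      intro W n hn
      have hgn : g ≫ n = 0 := by
        have : g = kernel.lift f g wg ≫ kernel.ι f := by simp
        rw [this, Category.assoc, hn, comp_zero]
      obtain ⟨u, hu⟩ := CokernelCofork.IsColimit.desc' hc n hgn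
      simp only [Cofork.π_ofπ] at hu
      exact ⟨u, hu⟩
    have hAdm : ∃ (X : C) (i : X ⟶ B), Ex.E i f := ⟨_, _, hmax (kernel.ι f) f hpair⟩
    obtain ⟨A₀, f₀, k, w₀, ⟨hlim⟩, X₂, i₂, hE₂⟩ := Ex.pullback_admEpi f t hAdm
    have hkcok : IsCokernelMor k := ⟨X₂, i₂, (Ex.pair hE₂).w, (Ex.pair hE₂).isCokernel⟩
    let e : P ≅ A₀ := hP.conePointUniqueUpToIso hlim
    have he : e.hom ≫ k = s' := by
      exact hP.conePointUniqueUpToIso_hom_comp hlim WalkingCospan.right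
    rw [← he]
    exact hkcok.iso_comp e

end AuxProofs

/-- Every additive (pre-abelian) category on which the class of all kernel-cokernel
pairs forms an exact structure is quasi-abelian; in particular, every AI-category is
quasi-abelian. -/
theorem stmt8 [HasKernels C] [HasCokernels C] :
    ((∃ Ex : ExactStructure C, ∀ ⦃A B Z : C⦄ (i : A ⟶ B) (d : B ⟶ Z),
        Ex.E i d ↔ IsKernelCokernelPair i d) → IsQuasiAbelian C) ∧
    (∀ Ex : ExactStructure C, AIAxiom Ex → IsQuasiAbelian C) := by
  constructor
  · rintro ⟨Ex, h⟩
    exact quasi_of_max Ex (fun A B X i d hp => (h i d).mpr hp)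
  · intro Ex hAI
    exact quasi_of_max Ex (fun A B X i d hp => pair_mem_of_AI Ex hAI i d hp)
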